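/- arXiv:2601.13743 — 2 statements merged into one kernel-verified Lean document; each statement's English description precedes it below -/
import Mathlib

section
/- Quantitative soundness of satisfaction classes (strengthening of Lemma 1 used in its inductive proof): for every STL formula φ with a classification criterion fixed as in the context, every satisfaction class ψ ∈ Cls⁺(φ), every valuation θ ∈ Θ, and every signal w, the robustness satisfies ρ(w, ψ(θ)) ≤ ρ(w, φ). -/
namespace STLClass

abbrev Signal (N : ℕ) := ℝ → Fin N → ℝ

def shift {N : ℕ} (w : Signal N) (t : ℝ) : Signal N := fun t' => w (t + t')

inductive STL (N : ℕ) : Type where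
  | atom (f : (Fin N → ℝ) → ℝ)
  | falsum
  | not (φ : STL N)
  | and (φ₁ φ₂ : STL N)
  | or (φ₁ φ₂ : STL N)
  | always (a b : ℝ) (φ : STL N)
  | event (a b : ℝ) (φ : STL N)
  | untl (a b : ℝ) (φ₁ φ₂ : STL N)

def STL.top {N : ℕ} : STL N := .not .falsum

noncomputable def robust {N : ℕ} : STL N → Signal N → EReal
  | .atom f, w => ((f (w 0) : ℝ) : EReal)
  | .falsum, _ => ⊥
  | .not φ, w => - robust φ w
  | .and φ₁ φ₂, w => min (robust φ₁ w) (robust φ₂ w)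
  | .or φ₁ φ₂, w => max (robust φ₁ w) (robust φ₂ w)
  | .always a b φ, w => ⨅ t : Set.Icc a b, robust φ (shift w t.1)
  | .event a b φ, w => ⨆ t : Set.Icc a b, robust φ (shift w t.1)
  | .untl a b φ₁ φ₂, w =>
      ⨆ t : Set.Icc a b,
        min (robust φ₂ (shift w t.1)) (⨅ t' : Set.Ico (0 : ℝ) t.1, robust φ₁ (shift w t'.1))

def Sat {N : ℕ} (w : Signal N) (φ : STL N) : Prop := 0 < robust φ w

def Vio {N : ℕ} (w : Signal N) (φ : STL N) : Prop := robust φ w < 0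

/-- An STL formula together with a classification criterion: each temporal operator is
annotated with a natural number `k`, meaning that its interval is split into `k + 1`
consecutive segments (so the "positive integer" of the criterion is `k + 1`). -/
inductive AForm (N : ℕ) : Type where
  | atom (f : (Fin N → ℝ) → ℝ)
  | falsum
  | not (φ : AForm N)
  | and (φ₁ φ₂ : AForm N)
  | or (φ₁ φ₂ : AForm N)
  | always (a b : ℝ) (k : ℕ) (φ : AForm N)
  | event (a b : ℝ) (k : ℕ) (φ : AForm N)
  | untl (a b : ℝ) (k : ℕ) (φ₁ φ₂ : AForm N)

/-- The underlying STL formula of an annotated formula. -/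
def AForm.toSTL {N : ℕ} : AForm N → STL N
  | .atom f => .atom f
  | .falsum => .falsum
  | .not φ => .not φ.toSTL
  | .and φ₁ φ₂ => .and φ₁.toSTL φ₂.toSTL
  | .or φ₁ φ₂ => .or φ₁.toSTL φ₂.toSTL
  | .always a b _ φ => .always a b φ.toSTL
  | .event a b _ φ => .event a b φ.toSTL
  | .untl a b _ φ₁ φ₂ => .untl a b φ₁.toSTL φ₂.toSTL

/-- Well-formedness: every temporal interval `[a, b]` satisfies `0 ≤ a < b`. -/
def AForm.WF {N : ℕ} : AForm N → Prop
  | .atom _ => True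
  | .falsum => True
  | .not φ => φ.WF
  | .and φ₁ φ₂ => φ₁.WF ∧ φ₂.WF
  | .or φ₁ φ₂ => φ₁.WF ∧ φ₂.WF
  | .always a b _ φ => 0 ≤ a ∧ a < b ∧ φ.WF
  | .event a b _ φ => 0 ≤ a ∧ a < b ∧ φ.WF
  | .untl a b _ φ₁ φ₂ => 0 ≤ a ∧ a < b ∧ φ₁.WF ∧ φ₂.WF

/-- A split of the interval `[a, b]` into `n` consecutive nonsingular segments:
`n + 1` strictly increasing points starting at `a` and ending at `b`.  The segment
`i` is `[pts i.castSucc, pts i.succ]`. -/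
structure Split (a b : ℝ) (n : ℕ) : Type where
  pts : Fin (n + 1) → ℝ
  strictMono : StrictMono pts
  first : pts 0 = a
  last : pts (Fin.last n) = b

/-- The valuation space `Θ` of an annotated formula: a choice of admissible breakpoints
for each temporal subformula. -/
def Val {N : ℕ} : AForm N → Type
  | .atom _ => PUnit
  | .falsum => PUnit
  | .not φ => Val φ
  | .and φ₁ φ₂ => Val φ₁ × Val φ₂
  | .or φ₁ φ₂ => Val φ₁ × Val φ₂
  | .always a b k φ => Split a b (k + 1) × Val φ
  | .event a b k φ => Split a b (k + 1) × Val φ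
  | .untl a b k φ₁ φ₂ => Split a b (k + 1) × Val φ₁ × Val φ₂

/-- Finite conjunction of a list of STL formulas (empty conjunction is `⊤`). -/
def listAnd {N : ℕ} : List (STL N) → STL N
  | [] => STL.top
  | [φ] => φ
  | φ :: φ' :: rest => .and φ (listAnd (φ' :: rest))

/-- Finite disjunction of a list of STL formulas (empty disjunction is `⊥`). -/
def listOr {N : ℕ} : List (STL N) → STL N
  | [] => .falsum
  | [φ] => φ
  | φ :: φ' :: rest => .or φ (listOr (φ' :: rest))

/-- `⋀_{i} f i`. -/
def iAnd {N : ℕ} {k : ℕ} (f : Fin k → STL N) : STL N := listAnd (List.ofFn f)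

/-- `⋁_{i} f i`. -/
def iOr {N : ℕ} {k : ℕ} (f : Fin k → STL N) : STL N := listOr (List.ofFn f)

/-- `Cls true φ` is the set `Cls⁺(φ)` of satisfaction classes and `Cls false φ` is the
set `Cls⁻(φ)` of violation classes; a class is represented by its instantiation map
`Θ → STL N` sending a valuation `θ` to the STL formula `ψ(θ)`. -/
def Cls {N : ℕ} : Bool → (φ : AForm N) → Set (Val φ → STL N)
  | b, .atom f =>
      {fun _ => if b then STL.falsum else STL.top, fun _ => STL.atom f}
  | _, .falsum => {fun _ => STL.falsum}
  | b, .not φ =>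
      {c | ∃ ψ ∈ Cls (!b) φ, c = fun θ => STL.not (ψ θ)}
  | b, .and φ₁ φ₂ =>
      {c | ∃ ψ₁ ∈ Cls b φ₁, ∃ ψ₂ ∈ Cls b φ₂,
        c = fun θ => STL.and (ψ₁ θ.1) (ψ₂ θ.2)}
  | b, .or φ₁ φ₂ =>
      {c | ∃ ψ₁ ∈ Cls b φ₁, ∃ ψ₂ ∈ Cls b φ₂,
        c = fun θ => STL.or (ψ₁ θ.1) (ψ₂ θ.2)}
  | b, .always _ _ k φ =>
      {c | ∃ ψ : Fin (k + 1) → Val φ → STL N, (∀ i, ψ i ∈ Cls b φ) ∧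
        c = fun θ => iAnd fun i : Fin (k + 1) =>
          STL.always (θ.1.pts i.castSucc) (θ.1.pts i.succ) (ψ i θ.2)}
  | b, .event _ _ k φ =>
      {c | ∃ ψ : Fin (k + 1) → Val φ → STL N, (∀ i, ψ i ∈ Cls b φ) ∧
        c = fun θ => iOr fun i : Fin (k + 1) =>
          STL.event (θ.1.pts i.castSucc) (θ.1.pts i.succ) (ψ i θ.2)}
  | b, .untl _ _ k φ₁ φ₂ =>
      {c | ∃ ψ : Fin (k + 1) → Val φ₁ → STL N, ∃ σ : Fin (k + 1) → Val φ₂ → STL N,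
           ∃ ξ : Fin (k + 1) → Fin (k + 1) → Val φ₁ → STL N,
        (∀ i, ψ i ∈ Cls b φ₁) ∧ (∀ i, σ i ∈ Cls b φ₂) ∧ (∀ i j, ξ i j ∈ Cls b φ₁) ∧
        c = fun θ => iOr fun i : Fin (k + 1) =>
          STL.and
            (STL.untl (θ.1.pts i.castSucc) (θ.1.pts i.succ) (ψ i θ.2.1) (σ i θ.2.2))
            (iAnd fun j : Fin (i : ℕ) =>
              STL.always (θ.1.pts (j.castLE i.isLt.le).castSucc)
                (θ.1.pts (j.castLE i.isLt.le).succ) (ξ i (j.castLE i.isLt.le) θ.2.1))}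

/-- The satisfiable set `S(ψ)` of a class. -/
def SatSet {N : ℕ} (φ : AForm N) (ψ : Val φ → STL N) : Set (Signal N) :=
  {w | ∃ θ : Val φ, Sat w (ψ θ)}

/-- The falsifiable set `V(ψ)` of a class. -/
def VioSet {N : ℕ} (φ : AForm N) (ψ : Val φ → STL N) : Set (Signal N) :=
  {w | ∃ θ : Val φ, Vio w (ψ θ)}



lemma robust_top_eq {N : ℕ} (w : Signal N) : robust (STL.top (N := N)) w = ⊤ := by
  simp [STL.top, robust]

lemma le_robust_listAnd {N : ℕ} (w : Signal N) (x : EReal) :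
    ∀ (l : List (STL N)), (∀ φ ∈ l, x ≤ robust φ w) → x ≤ robust (listAnd l) w
  | [] => fun _ => by rw [listAnd, robust_top_eq]; exact le_top
  | [φ] => fun h => by simpa [listAnd] using h φ (by simp)
  | φ :: φ' :: rest => fun h => by
      have h2 := le_robust_listAnd w x (φ' :: rest)
        (fun ψ hm => h ψ (List.mem_cons_of_mem _ hm))
      simpa [listAnd, robust] using le_min (h φ (by simp)) h2

lemma robust_listAnd_le {N : ℕ} (w : Signal N) :
    ∀ (l : List (STL N)) {φ : STL N}, φ ∈ l → robust (listAnd l) w ≤ robust φ w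
  | [], _, h => by simp at h
  | [ψ], φ, h => by
      rw [List.mem_singleton] at h; subst h; simp [listAnd]
  | ψ :: ψ' :: rest, φ, h => by
      rcases List.mem_cons.mp h with rfl | hm
      · simpa [listAnd, robust] using min_le_left _ _
      · exact le_trans (by simpa [listAnd, robust] using min_le_right (robust ψ w) _)
          (robust_listAnd_le w (ψ' :: rest) hm)

lemma robust_listOr_le {N : ℕ} (w : Signal N) (x : EReal) :
    ∀ (l : List (STL N)), (∀ φ ∈ l, robust φ w ≤ x) → robust (listOr l) w ≤ x
  | [] => fun _ => by simpa [listOr, robust] using bot_le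
  | [φ] => fun h => by simpa [listOr] using h φ (by simp)
  | φ :: φ' :: rest => fun h => by
      have h2 := robust_listOr_le w x (φ' :: rest)
        (fun ψ hm => h ψ (List.mem_cons_of_mem _ hm))
      simpa [listOr, robust] using max_le (h φ (by simp)) h2

lemma le_robust_listOr {N : ℕ} (w : Signal N) :
    ∀ (l : List (STL N)) {φ : STL N}, φ ∈ l → robust φ w ≤ robust (listOr l) w
  | [], _, h => by simp at h
  | [ψ], φ, h => by
      rw [List.mem_singleton] at h; subst h; simp [listOr]
  | ψ :: ψ' :: rest, φ, h => by
      rcases List.mem_cons.mp h with rfl | hm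
      · simpa [listOr, robust] using le_max_left _ _
      · exact le_trans (le_robust_listOr w (ψ' :: rest) hm)
          (by simpa [listOr, robust] using le_max_right (robust ψ w) _)

lemma le_robust_iAnd {N k : ℕ} (w : Signal N) (x : EReal) (f : Fin k → STL N)
    (h : ∀ i, x ≤ robust (f i) w) : x ≤ robust (iAnd f) w :=
  le_robust_listAnd w x _ (by
    intro φ hφ
    obtain ⟨i, rfl⟩ := List.mem_ofFn.mp hφ
    exact h i)

lemma robust_iAnd_le {N k : ℕ} (w : Signal N) (f : Fin k → STL N) (i : Fin k) :
    robust (iAnd f) w ≤ robust (f i) w :=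
  robust_listAnd_le w _ (List.mem_ofFn.mpr ⟨i, rfl⟩)

lemma robust_iOr_le {N k : ℕ} (w : Signal N) (x : EReal) (f : Fin k → STL N)
    (h : ∀ i, robust (f i) w ≤ x) : robust (iOr f) w ≤ x :=
  robust_listOr_le w x _ (by
    intro φ hφ
    obtain ⟨i, rfl⟩ := List.mem_ofFn.mp hφ
    exact h i)

lemma le_robust_iOr {N k : ℕ} (w : Signal N) (f : Fin k → STL N) (i : Fin k) :
    robust (f i) w ≤ robust (iOr f) w :=
  le_robust_listOr w _ (List.mem_ofFn.mpr ⟨i, rfl⟩)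

lemma Split.exists_seg {a b : ℝ} {n : ℕ} (s : Split a b (n + 1)) {t : ℝ}
    (h1 : a ≤ t) (h2 : t ≤ b) :
    ∃ i : Fin (n + 1), s.pts i.castSucc ≤ t ∧ t ≤ s.pts i.succ ∧
      ∀ j : Fin (n + 1), (j : ℕ) < (i : ℕ) → s.pts j.succ < t := by
  classical
  set F := Finset.univ.filter (fun i : Fin (n + 1) => t ≤ s.pts i.succ) with hF
  have hne : F.Nonempty := by
    refine ⟨Fin.last n, ?_⟩
    simp only [hF, Finset.mem_filter, Finset.mem_univ, true_and]
    rw [Fin.succ_last, s.last]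
    exact h2
  set i := F.min' hne with hi_def
  have hi : t ≤ s.pts i.succ := by
    have := F.min'_mem hne
    simp only [hF, Finset.mem_filter] at this
    exact this.2
  have hmin : ∀ j : Fin (n + 1), (j : ℕ) < (i : ℕ) → s.pts j.succ < t := by
    intro j hj
    by_contra hle
    push_neg at hle
    have hji : (i : ℕ) ≤ (j : ℕ) := F.min'_le j (by simp [hF, hle])
    omega
  refine ⟨i, ?_, hi, hmin⟩
  rcases Nat.eq_zero_or_pos (i : ℕ) with h0 | hpos
  · have hcs : i.castSucc = (0 : Fin (n + 2)) := by
      apply Fin.ext; simpa using h0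
    rw [hcs, s.first]
    exact h1
  · obtain ⟨m, hm⟩ := Nat.exists_eq_add_of_lt hpos
    have hmlt : m < n + 1 := by omega
    have hjlt : ((⟨m, hmlt⟩ : Fin (n + 1)) : ℕ) < (i : ℕ) := by simp; omega
    have h := hmin ⟨m, hmlt⟩ hjlt
    have hsucc : (⟨m, hmlt⟩ : Fin (n + 1)).succ = i.castSucc := by
      apply Fin.ext; simp; omega
    rw [hsucc] at h
    exact h.le

lemma key {N : ℕ} (φ : AForm N) : φ.WF → ∀ (b : Bool) (ψ : Val φ → STL N),
    ψ ∈ Cls b φ → ∀ (θ : Val φ) (w : Signal N),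
    (b = true → robust (ψ θ) w ≤ robust φ.toSTL w) ∧
    (b = false → robust φ.toSTL w ≤ robust (ψ θ) w) := by
  induction φ with
  | atom f =>
    intro _ b ψ hψ θ w
    simp only [Cls, Set.mem_insert_iff, Set.mem_singleton_iff] at hψ
    rcases hψ with rfl | rfl
    · cases b <;> constructor <;> intro hb <;> simp_all [robust, AForm.toSTL, robust_top_eq]
    · exact ⟨fun _ => le_refl _, fun _ => le_refl _⟩
  | falsum =>
    intro _ b ψ hψ θ w
    simp only [Cls, Set.mem_singleton_iff] at hψ; subst hψ
    exact ⟨fun _ => le_refl _, fun _ => le_refl _⟩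
  | not φ ih =>
    intro hφ b ψ hψ θ w
    simp only [Cls, Set.mem_setOf_eq] at hψ
    obtain ⟨ψ', hψ', rfl⟩ := hψ
    cases b
    · refine ⟨fun hb => by simp at hb, fun _ => ?_⟩
      show - robust φ.toSTL w ≤ - robust (ψ' θ) w
      exact EReal.neg_le_neg_iff.mpr ((ih hφ true ψ' hψ' θ w).1 rfl)
    · refine ⟨fun _ => ?_, fun hb => by simp at hb⟩
      show - robust (ψ' θ) w ≤ - robust φ.toSTL w
      exact EReal.neg_le_neg_iff.mpr ((ih hφ false ψ' hψ' θ w).2 rfl)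
  | and φ₁ φ₂ ih₁ ih₂ =>
    intro hφ b ψ hψ θ w
    simp only [Cls, Set.mem_setOf_eq] at hψ
    obtain ⟨ψ₁, h1, ψ₂, h2, rfl⟩ := hψ
    constructor <;> intro hb <;> subst hb
    · exact min_le_min ((ih₁ hφ.1 true ψ₁ h1 θ.1 w).1 rfl) ((ih₂ hφ.2 true ψ₂ h2 θ.2 w).1 rfl)
    · exact min_le_min ((ih₁ hφ.1 false ψ₁ h1 θ.1 w).2 rfl) ((ih₂ hφ.2 false ψ₂ h2 θ.2 w).2 rfl)
  | or φ₁ φ₂ ih₁ ih₂ =>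
    intro hφ b ψ hψ θ w
    simp only [Cls, Set.mem_setOf_eq] at hψ
    obtain ⟨ψ₁, h1, ψ₂, h2, rfl⟩ := hψ
    constructor <;> intro hb <;> subst hb
    · exact max_le_max ((ih₁ hφ.1 true ψ₁ h1 θ.1 w).1 rfl) ((ih₂ hφ.2 true ψ₂ h2 θ.2 w).1 rfl)
    · exact max_le_max ((ih₁ hφ.1 false ψ₁ h1 θ.1 w).2 rfl) ((ih₂ hφ.2 false ψ₂ h2 θ.2 w).2 rfl)
  | always a b' k φ ih =>
    intro hφ b ψ hψ θ w
    simp only [Cls, Set.mem_setOf_eq] at hψ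
    obtain ⟨ψ', hmem, rfl⟩ := hψ
    obtain ⟨ha, hab, hwf⟩ := hφ
    have hmono := θ.1.strictMono.monotone
    constructor <;> intro hb <;> subst hb
    · -- robust (iAnd ...) ≤ ⨅ t : Icc a b', robust φ.toSTL (shift w t)
      show _ ≤ robust (AForm.always a b' k φ).toSTL w
      refine le_iInf fun t => ?_
      obtain ⟨i, hl, hu, _⟩ := θ.1.exists_seg t.2.1 t.2.2
      refine le_trans (robust_iAnd_le w _ i) ?_
      refine le_trans (iInf_le _ (⟨t.1, hl, hu⟩ : Set.Icc (θ.1.pts i.castSucc) (θ.1.pts i.succ))) ?_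
      exact (ih hwf true (ψ' i) (hmem i) θ.2 (shift w t.1)).1 rfl
    · show robust (AForm.always a b' k φ).toSTL w ≤ _
      refine le_robust_iAnd w _ _ fun i => ?_
      refine le_iInf fun t => ?_
      have h1 : a ≤ t.1 := by
        have h := hmono (Fin.zero_le i.castSucc)
        rw [θ.1.first] at h
        exact h.trans t.2.1
      have h2 : t.1 ≤ b' := by
        have h := hmono (Fin.le_last i.succ)
        rw [θ.1.last] at h
        exact t.2.2.trans h
      refine le_trans (iInf_le _ (⟨t.1, h1, h2⟩ : Set.Icc a b')) ?_
      exact (ih hwf false (ψ' i) (hmem i) θ.2 (shift w t.1)).2 rfl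
  | event a b' k φ ih =>
    intro hφ b ψ hψ θ w
    simp only [Cls, Set.mem_setOf_eq] at hψ
    obtain ⟨ψ', hmem, rfl⟩ := hψ
    obtain ⟨ha, hab, hwf⟩ := hφ
    have hmono := θ.1.strictMono.monotone
    constructor <;> intro hb <;> subst hb
    · show _ ≤ robust (AForm.event a b' k φ).toSTL w
      refine robust_iOr_le w _ _ fun i => ?_
      refine iSup_le fun t => ?_
      have h1 : a ≤ t.1 := by
        have h := hmono (Fin.zero_le i.castSucc)
        rw [θ.1.first] at h
        exact h.trans t.2.1
      have h2 : t.1 ≤ b' := by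
        have h := hmono (Fin.le_last i.succ)
        rw [θ.1.last] at h
        exact t.2.2.trans h
      refine le_trans ?_ (le_iSup _ (⟨t.1, h1, h2⟩ : Set.Icc a b'))
      exact (ih hwf true (ψ' i) (hmem i) θ.2 (shift w t.1)).1 rfl
    · show robust (AForm.event a b' k φ).toSTL w ≤ _
      refine iSup_le fun t => ?_
      obtain ⟨i, hl, hu, _⟩ := θ.1.exists_seg t.2.1 t.2.2
      refine le_trans ?_ (le_robust_iOr w _ i)
      refine le_trans ?_ (le_iSup _ (⟨t.1, hl, hu⟩ : Set.Icc (θ.1.pts i.castSucc) (θ.1.pts i.succ)))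
      exact (ih hwf false (ψ' i) (hmem i) θ.2 (shift w t.1)).2 rfl
  | untl a b' k φ₁ φ₂ ih₁ ih₂ =>
    intro hφ b ψ hψ θ w
    simp only [Cls, Set.mem_setOf_eq] at hψ
    obtain ⟨ψ', σ', ξ', hψm, hσm, hξm, rfl⟩ := hψ
    obtain ⟨ha, hab, hwf₁, hwf₂⟩ := hφ
    have hmono := θ.1.strictMono.monotone
    constructor <;> intro hb <;> subst hb
    · show _ ≤ robust (AForm.untl a b' k φ₁ φ₂).toSTL w
      refine robust_iOr_le w _ _ fun i => ?_
      refine le_trans (min_le_left _ _) ?_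
      show (⨆ t : Set.Icc (θ.1.pts i.castSucc) (θ.1.pts i.succ), _) ≤ _
      refine iSup_le fun t => ?_
      have h1 : a ≤ t.1 := by
        have h := hmono (Fin.zero_le i.castSucc)
        rw [θ.1.first] at h
        exact h.trans t.2.1
      have h2 : t.1 ≤ b' := by
        have h := hmono (Fin.le_last i.succ)
        rw [θ.1.last] at h
        exact t.2.2.trans h
      refine le_trans ?_ (le_iSup _ (⟨t.1, h1, h2⟩ : Set.Icc a b'))
      refine min_le_min ((ih₂ hwf₂ true (σ' i) (hσm i) θ.2.2 (shift w t.1)).1 rfl) ?_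
      refine le_iInf fun t' => ?_
      refine le_trans (iInf_le _ t') ?_
      exact (ih₁ hwf₁ true (ψ' i) (hψm i) θ.2.1 (shift w t'.1)).1 rfl
    · show robust (AForm.untl a b' k φ₁ φ₂).toSTL w ≤ _
      refine iSup_le fun t => ?_
      obtain ⟨i, hl, hu, hjs⟩ := θ.1.exists_seg t.2.1 t.2.2
      refine le_trans ?_ (le_robust_iOr w _ i)
      refine le_min ?_ ?_
      · -- ≤ robust .untl piece
        refine le_trans ?_
          (le_iSup _ (⟨t.1, hl, hu⟩ : Set.Icc (θ.1.pts i.castSucc) (θ.1.pts i.succ)))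
        refine min_le_min ((ih₂ hwf₂ false (σ' i) (hσm i) θ.2.2 (shift w t.1)).2 rfl) ?_
        refine le_iInf fun t' => ?_
        refine le_trans (iInf_le _ t') ?_
        exact (ih₁ hwf₁ false (ψ' i) (hψm i) θ.2.1 (shift w t'.1)).2 rfl
      · -- ≤ robust (iAnd over j < i)
        refine le_robust_iAnd w _ _ fun j => ?_
        refine le_iInf fun s => ?_
        have hs0 : (0 : ℝ) ≤ s.1 := by
          have h := hmono (Fin.zero_le (j.castLE i.isLt.le).castSucc)
          rw [θ.1.first] at h
          exact le_trans ha (h.trans s.2.1)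
        have hst : s.1 < t.1 :=
          lt_of_le_of_lt s.2.2 (hjs (j.castLE i.isLt.le) (by simp))
        refine le_trans (min_le_right _ _) ?_
        refine le_trans (iInf_le _ (⟨s.1, hs0, hst⟩ : Set.Ico (0 : ℝ) t.1)) ?_
        exact (ih₁ hwf₁ false (ξ' i (j.castLE i.isLt.le)) (hξm i _) θ.2.1 (shift w s.1)).2 rfl

/-- Quantitative soundness of satisfaction classes: for every `ψ ∈ Cls⁺(φ)`, every
valuation `θ ∈ Θ` and every signal `w`, `ρ(w, ψ(θ)) ≤ ρ(w, φ)`. -/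
theorem sat_class_quantitative {N : ℕ} (φ : AForm N) (hφ : φ.WF)
    (ψ : Val φ → STL N) (hψ : ψ ∈ Cls true φ) (θ : Val φ) (w : Signal N) :
    robust (ψ θ) w ≤ robust φ.toSTL w := (key φ hφ true ψ hψ θ w).1 rfl

end STLClass
end

section
/- Completeness of satisfaction classes (Lemma 2, satisfaction part): Let φ be an STL formula with a classification criterion fixed as in the context. For every signal w with w ⊨ φ, there exists a satisfaction class ψ ∈ Cls⁺(φ) such that w ∈ S(ψ), i.e. there exists a valuation θ ∈ Θ with w ⊨ ψ(θ). -/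
namespace STLClass

/-! ### Auxiliary development -/

noncomputable def defaultSplit (a b : ℝ) (h : a < b) (n : ℕ) : Split a b (n + 1) where
  pts i := a + (i : ℝ) * ((b - a) / (n + 1))
  strictMono := by
    intro i j hij
    have h1 : (0:ℝ) < (b - a) / (n + 1) := div_pos (by linarith) (by positivity)
    have h2 : (i : ℝ) < (j : ℝ) := by exact_mod_cast hij
    have := mul_lt_mul_of_pos_right h2 h1
    simpa using this
  first := by simp
  last := by
    have hne : ((n:ℝ) + 1) ≠ 0 := by positivity
    simp only [Fin.val_last]
    push_cast
    field_simp
    ring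

noncomputable def trivVal {N : ℕ} : (φ : AForm N) → φ.WF → Val φ
  | .atom _, _ => PUnit.unit
  | .falsum, _ => PUnit.unit
  | .not φ, h => trivVal φ h
  | .and φ₁ φ₂, h => (trivVal φ₁ h.1, trivVal φ₂ h.2)
  | .or φ₁ φ₂, h => (trivVal φ₁ h.1, trivVal φ₂ h.2)
  | .always a b k φ, h => (defaultSplit a b h.2.1 k, trivVal φ h.2.2)
  | .event a b k φ, h => (defaultSplit a b h.2.1 k, trivVal φ h.2.2)
  | .untl a b k φ₁ φ₂, h =>
      (defaultSplit a b h.2.1 k, trivVal φ₁ h.2.2.1, trivVal φ₂ h.2.2.2)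

def trivCls {N : ℕ} : (φ : AForm N) → Val φ → STL N
  | .atom f => fun _ => .atom f
  | .falsum => fun _ => .falsum
  | .not φ => fun θ => .not (trivCls φ θ)
  | .and φ₁ φ₂ => fun θ => .and (trivCls φ₁ θ.1) (trivCls φ₂ θ.2)
  | .or φ₁ φ₂ => fun θ => .or (trivCls φ₁ θ.1) (trivCls φ₂ θ.2)
  | .always _ _ k φ => fun θ => iAnd fun i : Fin (k + 1) =>
      STL.always (θ.1.pts i.castSucc) (θ.1.pts i.succ) (trivCls φ θ.2)
  | .event _ _ k φ => fun θ => iOr fun i : Fin (k + 1) =>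
      STL.event (θ.1.pts i.castSucc) (θ.1.pts i.succ) (trivCls φ θ.2)
  | .untl _ _ k φ₁ φ₂ => fun θ => iOr fun i : Fin (k + 1) =>
      STL.and
        (STL.untl (θ.1.pts i.castSucc) (θ.1.pts i.succ) (trivCls φ₁ θ.2.1)
          (trivCls φ₂ θ.2.2))
        (iAnd fun j : Fin (i : ℕ) =>
          STL.always (θ.1.pts (j.castLE i.isLt.le).castSucc)
            (θ.1.pts (j.castLE i.isLt.le).succ) (trivCls φ₁ θ.2.1))

lemma trivCls_mem {N : ℕ} : ∀ (bl : Bool) (φ : AForm N), trivCls φ ∈ Cls bl φ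
  | _, .atom _ => Or.inr rfl
  | _, .falsum => rfl
  | bl, .not φ => ⟨trivCls φ, trivCls_mem (!bl) φ, rfl⟩
  | bl, .and φ₁ φ₂ => ⟨_, trivCls_mem bl φ₁, _, trivCls_mem bl φ₂, rfl⟩
  | bl, .or φ₁ φ₂ => ⟨_, trivCls_mem bl φ₁, _, trivCls_mem bl φ₂, rfl⟩
  | bl, .always _ _ _ φ => ⟨fun _ => trivCls φ, fun _ => trivCls_mem bl φ, rfl⟩
  | bl, .event _ _ _ φ => ⟨fun _ => trivCls φ, fun _ => trivCls_mem bl φ, rfl⟩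
  | bl, .untl _ _ _ φ₁ φ₂ =>
      ⟨fun _ => trivCls φ₁, fun _ => trivCls φ₂, fun _ _ => trivCls φ₁,
        fun _ => trivCls_mem bl φ₁, fun _ => trivCls_mem bl φ₂,
        fun _ _ => trivCls_mem bl φ₁, rfl⟩

lemma robust_top {N : ℕ} (w : Signal N) : robust (STL.top : STL N) w = ⊤ := by
  simp [STL.top, robust]

lemma robust_listAnd_cons {N : ℕ} (x : STL N) (l : List (STL N)) (w : Signal N) :
    robust (listAnd (x :: l)) w = min (robust x w) (robust (listAnd l) w) := by
  cases l with
  | nil => simp [listAnd, robust_top]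
  | cons y r => rfl

lemma robust_listOr_cons {N : ℕ} (x : STL N) (l : List (STL N)) (w : Signal N) :
    robust (listOr (x :: l)) w = max (robust x w) (robust (listOr l) w) := by
  cases l with
  | nil => simp [listOr, robust]
  | cons y r => rfl

lemma iInf_fin_succ' {α : Type*} [CompleteLattice α] {k : ℕ} (g : Fin (k + 1) → α) :
    ⨅ i, g i = g 0 ⊓ ⨅ i : Fin k, g i.succ := by
  apply le_antisymm
  · exact le_inf (iInf_le _ 0) (le_iInf fun i => iInf_le _ i.succ)
  · refine le_iInf fun i => ?_
    induction i using Fin.cases with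
    | zero => exact inf_le_left
    | succ i => exact inf_le_right.trans (iInf_le _ i)

lemma iSup_fin_succ' {α : Type*} [CompleteLattice α] {k : ℕ} (g : Fin (k + 1) → α) :
    ⨆ i, g i = g 0 ⊔ ⨆ i : Fin k, g i.succ := by
  apply le_antisymm
  · refine iSup_le fun i => ?_
    induction i using Fin.cases with
    | zero => exact le_sup_left
    | succ i => exact le_trans (le_iSup (fun i => g i.succ) i) le_sup_right
  · exact sup_le (le_iSup _ 0) (iSup_le fun i => le_iSup _ i.succ)

lemma robust_iAnd {N : ℕ} : ∀ {k : ℕ} (f : Fin k → STL N) (w : Signal N),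
    robust (iAnd f) w = ⨅ i, robust (f i) w
  | 0, f, w => by
      simp only [iAnd, List.ofFn_zero, listAnd, robust_top]
      exact (iInf_of_empty _).symm
  | k + 1, f, w => by
      rw [iAnd, List.ofFn_succ, robust_listAnd_cons, show listAnd (List.ofFn fun i : Fin k => f i.succ) = iAnd fun i : Fin k => f i.succ from rfl, robust_iAnd]
      rw [iInf_fin_succ' fun i => robust (f i) w]

lemma robust_iOr {N : ℕ} : ∀ {k : ℕ} (f : Fin k → STL N) (w : Signal N),
    robust (iOr f) w = ⨆ i, robust (f i) w
  | 0, f, w => by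
      simp only [iOr, List.ofFn_zero, listOr, robust]
      exact (iSup_of_empty _).symm
  | k + 1, f, w => by
      rw [iOr, List.ofFn_succ, robust_listOr_cons, show listOr (List.ofFn fun i : Fin k => f i.succ) = iOr fun i : Fin k => f i.succ from rfl, robust_iOr]
      rw [iSup_fin_succ' fun i => robust (f i) w]

namespace Split

lemma seg_subset {a b : ℝ} {n : ℕ} (s : Split a b n) (i : Fin n) :
    Set.Icc (s.pts i.castSucc) (s.pts i.succ) ⊆ Set.Icc a b := by
  intro t ht
  constructor
  · calc a = s.pts 0 := s.first.symm
      _ ≤ s.pts i.castSucc := s.strictMono.monotone (Fin.zero_le _)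
      _ ≤ t := ht.1
  · calc t ≤ s.pts i.succ := ht.2
      _ ≤ s.pts (Fin.last n) := s.strictMono.monotone (Fin.le_last _)
      _ = b := s.last

lemma covers {a b : ℝ} {n : ℕ} (s : Split a b (n + 1)) {t : ℝ}
    (ht : t ∈ Set.Icc a b) :
    ∃ i : Fin (n + 1), t ∈ Set.Icc (s.pts i.castSucc) (s.pts i.succ) := by
  classical
  set S : Finset (Fin (n + 2)) := Finset.univ.filter fun j => s.pts j ≤ t with hS
  have h0 : (0 : Fin (n + 2)) ∈ S := by
    simp only [hS, Finset.mem_filter, Finset.mem_univ, true_and, s.first]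
    exact ht.1
  have hSne : S.Nonempty := ⟨0, h0⟩
  have hj₀le : s.pts (S.max' hSne) ≤ t := by
    have := S.max'_mem hSne
    simp only [hS, Finset.mem_filter] at this
    exact this.2
  by_cases hlast : S.max' hSne = Fin.last (n + 1)
  · have htb : t = b := le_antisymm ht.2 (by rw [← s.last, ← hlast]; exact hj₀le)
    refine ⟨Fin.last n, ?_, ?_⟩
    · have hm := s.strictMono.monotone (Fin.le_last ((Fin.last n).castSucc))
      rw [s.last] at hm
      rw [htb]; exact hm
    · have : s.pts (Fin.last n).succ = b := by rw [Fin.succ_last, s.last]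
      rw [htb, this]
  · have hlt : ((S.max' hSne : Fin (n+2)) : ℕ) < n + 1 := by
      rcases lt_or_eq_of_le (Fin.le_last (S.max' hSne)) with h | h
      · exact h
      · exact absurd h hlast
    refine ⟨⟨(S.max' hSne : ℕ), hlt⟩, ?_, ?_⟩
    · have : (⟨(S.max' hSne : ℕ), hlt⟩ : Fin (n+1)).castSucc = S.max' hSne := by
        ext; rfl
      rw [this]; exact hj₀le
    · by_contra hc
      push_neg at hc
      have hmem : (⟨(S.max' hSne : ℕ), hlt⟩ : Fin (n+1)).succ ∈ S := by
        simp only [hS, Finset.mem_filter, Finset.mem_univ, true_and]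
        exact hc.le
      have := S.le_max' _ hmem
      simp only [Fin.le_def, Fin.val_succ] at this
      omega

lemma covers' {a b : ℝ} {n : ℕ} (s : Split a b (n + 1)) {t : ℝ}
    (ht1 : a < t) (ht2 : t ≤ b) :
    ∃ i : Fin (n + 1), s.pts i.castSucc < t ∧ t ≤ s.pts i.succ := by
  classical
  set S : Finset (Fin (n + 2)) := Finset.univ.filter fun j => s.pts j < t with hS
  have h0 : (0 : Fin (n + 2)) ∈ S := by
    simp only [hS, Finset.mem_filter, Finset.mem_univ, true_and, s.first]
    exact ht1
  have hSne : S.Nonempty := ⟨0, h0⟩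
  have hj₀lt : s.pts (S.max' hSne) < t := by
    have := S.max'_mem hSne
    simp only [hS, Finset.mem_filter] at this
    exact this.2
  have hlast : S.max' hSne ≠ Fin.last (n + 1) := by
    intro h
    rw [h, s.last] at hj₀lt
    exact absurd ht2 (not_le.mpr hj₀lt)
  have hlt : ((S.max' hSne : Fin (n+2)) : ℕ) < n + 1 := by
    rcases lt_or_eq_of_le (Fin.le_last (S.max' hSne)) with h | h
    · exact h
    · exact absurd h hlast
  refine ⟨⟨(S.max' hSne : ℕ), hlt⟩, ?_, ?_⟩
  · have : (⟨(S.max' hSne : ℕ), hlt⟩ : Fin (n+1)).castSucc = S.max' hSne := by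
      ext; rfl
    rw [this]; exact hj₀lt
  · by_contra hc
    push_neg at hc
    have hmem : (⟨(S.max' hSne : ℕ), hlt⟩ : Fin (n+1)).succ ∈ S := by
      simp only [hS, Finset.mem_filter, Finset.mem_univ, true_and]
      exact hc
    have := S.le_max' _ hmem
    simp only [Fin.le_def, Fin.val_succ] at this
    omega

lemma iInf_eq {a b : ℝ} {n : ℕ} (s : Split a b (n + 1)) (f : ℝ → EReal) :
    (⨅ t : Set.Icc a b, f t.1) =
      ⨅ i : Fin (n + 1), ⨅ t : Set.Icc (s.pts i.castSucc) (s.pts i.succ), f t.1 := by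
  apply le_antisymm
  · exact le_iInf fun i => le_iInf fun t =>
      iInf_le_of_le ⟨t.1, s.seg_subset i t.2⟩ le_rfl
  · refine le_iInf fun t => ?_
    obtain ⟨i, hi⟩ := s.covers t.2
    exact iInf_le_of_le i (iInf_le_of_le ⟨t.1, hi⟩ le_rfl)

lemma iSup_eq {a b : ℝ} {n : ℕ} (s : Split a b (n + 1)) (f : ℝ → EReal) :
    (⨆ t : Set.Icc a b, f t.1) =
      ⨆ i : Fin (n + 1), ⨆ t : Set.Icc (s.pts i.castSucc) (s.pts i.succ), f t.1 := by
  apply le_antisymm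
  · refine iSup_le fun t => ?_
    obtain ⟨i, hi⟩ := s.covers t.2
    exact le_iSup_of_le i (le_iSup_of_le ⟨t.1, hi⟩ le_rfl)
  · exact iSup_le fun i => iSup_le fun t =>
      le_iSup_of_le ⟨t.1, s.seg_subset i t.2⟩ le_rfl

end Split

lemma robust_trivCls {N : ℕ} (φ : AForm N) : φ.WF → ∀ (θ : Val φ) (w : Signal N),
    robust (trivCls φ θ) w = robust φ.toSTL w := by
  induction φ with
  | atom f => intro _ _ _; rfl
  | falsum => intro _ _ _; rfl
  | not φ ih => intro h θ w; simp only [trivCls, AForm.toSTL, robust, ih h θ w]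
  | and φ₁ φ₂ ih₁ ih₂ =>
      intro h θ w
      simp only [trivCls, AForm.toSTL, robust, ih₁ h.1 θ.1 w, ih₂ h.2 θ.2 w]
  | or φ₁ φ₂ ih₁ ih₂ =>
      intro h θ w
      simp only [trivCls, AForm.toSTL, robust, ih₁ h.1 θ.1 w, ih₂ h.2 θ.2 w]
  | always a b k φ ih =>
      intro h θ w
      obtain ⟨s, θ'⟩ := θ
      simp only [trivCls, AForm.toSTL, robust_iAnd, robust, ih h.2.2 θ']
      exact (s.iInf_eq fun t => robust φ.toSTL (shift w t)).symm
  | event a b k φ ih =>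
      intro h θ w
      obtain ⟨s, θ'⟩ := θ
      simp only [trivCls, AForm.toSTL, robust_iOr, robust, ih h.2.2 θ']
      exact (s.iSup_eq fun t => robust φ.toSTL (shift w t)).symm
  | untl a b k φ₁ φ₂ ih₁ ih₂ =>
      intro h θ w
      obtain ⟨h0a, hab, h1, h2⟩ := h
      obtain ⟨s, θ₁, θ₂⟩ := θ
      simp only [trivCls, AForm.toSTL, robust_iOr, robust, robust_iAnd,
        ih₁ h1 θ₁, ih₂ h2 θ₂]
      apply le_antisymm
      · refine iSup_le fun i => (min_le_left _ _).trans (iSup_le fun t => ?_)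
        exact le_iSup_of_le ⟨t.1, s.seg_subset i t.2⟩ le_rfl
      · refine iSup_le fun t => ?_
        obtain ⟨hat, htb⟩ := t.2
        rcases eq_or_lt_of_le hat with hEq | hlt
        · refine le_iSup_of_le 0 (le_min ?_ ?_)
          · refine le_iSup_of_le ⟨t.1, ?_, ?_⟩ le_rfl
            · show s.pts (0 : Fin (k + 1)).castSucc ≤ t.1
              rw [show (0 : Fin (k + 1)).castSucc = (0 : Fin (k + 2)) from rfl, s.first]
              exact hat
            · show t.1 ≤ s.pts (0 : Fin (k + 1)).succ
              calc t.1 = a := hEq.symm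
                _ = s.pts 0 := s.first.symm
                _ ≤ s.pts (0 : Fin (k + 1)).succ := s.strictMono.monotone (Fin.zero_le _)
          · refine le_iInf fun j => ?_
            exact absurd j.isLt (by simp)
        · obtain ⟨i, hi1, hi2⟩ := s.covers' hlt htb
          refine le_iSup_of_le i (le_min ?_ ?_)
          · exact le_iSup_of_le ⟨t.1, hi1.le, hi2⟩ le_rfl
          · refine le_iInf fun j => le_iInf fun t' => ?_
            refine (min_le_right _ _).trans (iInf_le_of_le ⟨t'.1, ?_, ?_⟩ le_rfl)
            · calc (0 : ℝ) ≤ a := h0a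
                _ = s.pts 0 := s.first.symm
                _ ≤ s.pts (j.castLE i.isLt.le).castSucc :=
                    s.strictMono.monotone (Fin.zero_le _)
                _ ≤ t'.1 := t'.2.1
            · calc t'.1 ≤ s.pts (j.castLE i.isLt.le).succ := t'.2.2
                _ ≤ s.pts i.castSucc := s.strictMono.monotone (by
                    simp only [Fin.le_def, Fin.val_succ, Fin.coe_castSucc, Fin.coe_castLE]
                    exact j.isLt)
                _ < t.1 := hi1


/-- Completeness of satisfaction classes (Lemma 2, satisfaction part): if `w ⊨ φ`,
then there is a satisfaction class `ψ ∈ Cls⁺(φ)` with `w ∈ S(ψ)`, i.e. `w ⊨ ψ(θ)`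
for some valuation `θ ∈ Θ`. -/
theorem sat_class_complete {N : ℕ} (φ : AForm N) (hφ : φ.WF) (w : Signal N)
    (hw : Sat w φ.toSTL) :
    ∃ ψ ∈ Cls true φ, ∃ θ : Val φ, Sat w (ψ θ) :=
  ⟨trivCls φ, trivCls_mem true φ, trivVal φ hφ, by
    simpa [Sat, robust_trivCls φ hφ] using hw⟩

end STLClass
end
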